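/- Let n ≥ 2 and m ≥ 2 be integers. Define Π: J(2^n, R_m) → (ℤ/2ℤ)^{P}, where P is the set of pairs (i, j) with 1 ≤ i < j ≤ m, to be the additive group homomorphism whose (i, j)-component sends each generator f^{2^n} (f ∈ R_m) to the residue mod 2 of c_{f^{2^n}}(x_i x_j)/2^n + c_{f^{2^n}}(x_i^{2^{n−1}} x_j^{2^{n−1}})/2. Then Π is surjective onto (ℤ/2ℤ)^{P}, a group of order 2^{m(m−1)/2}. -/

import Mathlib

set_option linter.unnecessarySeqFocus false
set_option linter.unusedTactic false
set_option linter.unusedVariables false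

open MvPolynomial Finset in
lemma aux_coeff (m : ℕ) (i j : Fin m) (N : ℕ) (d : Fin m →₀ ℕ) :
    MvPolynomial.coeff d ((X i + X j : MvPolynomial (Fin m) ℤ) ^ N) =
      ∑ k ∈ Finset.range (N+1),
        if Finsupp.single i k + Finsupp.single j (N-k) = d then (N.choose k : ℤ) else 0 := by
  rw [add_pow, MvPolynomial.coeff_sum]
  refine Finset.sum_congr rfl fun k hk => ?_
  have : ((N.choose k : ℕ) : MvPolynomial (Fin m) ℤ) = C ((N.choose k : ℕ) : ℤ) := by
    norm_cast
  rw [this, mul_comm _ (C _), MvPolynomial.coeff_C_mul, X_pow_eq_monomial, X_pow_eq_monomial,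
    monomial_mul, mul_one, MvPolynomial.coeff_monomial]
  split <;> simp

open MvPolynomial Finset in
lemma aux_coeff_same (m : ℕ) (i j : Fin m) (hij : i ≠ j) (N a b : ℕ) :
    MvPolynomial.coeff (Finsupp.single i a + Finsupp.single j b)
        ((X i + X j : MvPolynomial (Fin m) ℤ) ^ N) =
      if a + b = N then (N.choose a : ℤ) else 0 := by
  rw [aux_coeff]
  have key : ∀ k : ℕ, (Finsupp.single i k + Finsupp.single j (N-k)
      = Finsupp.single i a + Finsupp.single j b) ↔ (k = a ∧ N - k = b) := by
    intro k
    constructor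
    · intro h
      have hi := DFunLike.congr_fun h i
      have hj := DFunLike.congr_fun h j
      simp [Finsupp.add_apply, Finsupp.single_apply, hij, hij.symm, Ne.symm hij] at hi hj
      exact ⟨hi, hj⟩
    · rintro ⟨rfl, h⟩; rw [h]
  by_cases hab : a + b = N
  · rw [if_pos hab]
    have : ∀ k ∈ Finset.range (N+1),
        (if Finsupp.single i k + Finsupp.single j (N-k)
          = Finsupp.single i a + Finsupp.single j b then (N.choose k : ℤ) else 0)
        = if k = a then (N.choose k : ℤ) else 0 := by
      intro k hk
      simp only [Finset.mem_range] at hk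
      by_cases hka : k = a
      · subst hka
        rw [if_pos ((key k).mpr ⟨rfl, by omega⟩), if_pos rfl]
      · rw [if_neg hka, if_neg (fun h => hka ((key k).mp h).1)]
    rw [Finset.sum_congr rfl this, Finset.sum_ite_eq' (Finset.range (N+1)) a]
    rw [if_pos (Finset.mem_range.mpr (by omega))]
  · rw [if_neg hab]
    apply Finset.sum_eq_zero
    intro k hk
    simp only [Finset.mem_range] at hk
    rw [if_neg]
    intro h
    obtain ⟨rfl, h2⟩ := (key k).mp h
    omega

open MvPolynomial Finset in
lemma aux_coeff_ne (m : ℕ) (i j k l : Fin m) (hij : i < j) (hkl : k < l)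
    (hne : ¬(k = i ∧ l = j)) (N c : ℕ) (hc : 0 < c) :
    MvPolynomial.coeff (Finsupp.single k c + Finsupp.single l c)
        ((X i + X j : MvPolynomial (Fin m) ℤ) ^ N) = 0 := by
  rw [aux_coeff]
  apply Finset.sum_eq_zero
  intro u hu
  rw [if_neg]
  intro h
  have hmem : ∀ x : Fin m, x = k ∨ x = l → x = i ∨ x = j := by
    intro x hx
    have hxv := DFunLike.congr_fun h x
    by_contra hcon
    push_neg at hcon
    obtain ⟨hxi, hxj⟩ := hcon
    have hklne : k ≠ l := ne_of_lt hkl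
    rcases hx with rfl | rfl <;>
      simp [Finsupp.add_apply, Finsupp.single_apply, Ne.symm hxi, Ne.symm hxj,
        hklne, Ne.symm hklne] at hxv <;> omega
  have h1 := hmem k (Or.inl rfl)
  have h2 := hmem l (Or.inr rfl)
  apply hne
  rcases h1 with rfl | rfl
  · rcases h2 with rfl | rfl
    · exact absurd hkl (lt_irrefl _)
    · exact ⟨rfl, rfl⟩
  · rcases h2 with rfl | rfl
    · exact absurd (hij.trans hkl) (lt_irrefl _)
    · exact absurd hkl (lt_irrefl _)

lemma aux_odd_choose : ∀ s k : ℕ, k ≤ 2^s - 1 → (2^s - 1).choose k % 2 = 1 := by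
  intro s
  induction s with
  | zero => intro k hk; interval_cases k; rfl
  | succ s ih =>
    intro k hk
    haveI : Fact (2:ℕ).Prime := ⟨Nat.prime_two⟩
    have key := @Choose.choose_modEq_choose_mod_mul_choose_div_nat (2^(s+1)-1) k 2 _
    have h : 2^(s+1) = 2 * 2^s := by ring
    have h1 : (1:ℕ) ≤ 2^s := Nat.one_le_two_pow
    have hmod : (2^(s+1)-1) % 2 = 1 := by omega
    have hdiv : (2^(s+1)-1) / 2 = 2^s - 1 := by omega
    rw [hmod, hdiv] at key
    have hc1 : Nat.choose 1 (k % 2) = 1 := by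
      have hk2 : k % 2 ≤ 1 := by omega
      interval_cases h : k % 2 <;> rfl
    rw [hc1, one_mul] at key
    have := ih (k/2) (by omega)
    unfold Nat.ModEq at key
    omega

lemma aux_parity (n : ℕ) (hn : 1 ≤ n) :
    ((((2^n).choose (2^(n-1)) : ℤ) / 2 : ℤ) : ZMod 2) = 1 := by
  obtain ⟨s, rfl⟩ : ∃ s, n = s + 1 := ⟨n-1, by omega⟩
  simp only [Nat.add_sub_cancel]
  set c := (2^(s+1)-1).choose (2^s - 1) with hc
  have e0 : 2^(s+1) = 2 * 2^s := by ring
  have hs1 : (1:ℕ) ≤ 2^s := Nat.one_le_two_pow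
  have h1 : 2^(s+1) * c = (2^(s+1)).choose (2^s) * 2^s := by
    have h := Nat.add_one_mul_choose_eq (2^(s+1)-1) (2^s-1)
    have e1 : (2^(s+1)-1) + 1 = 2^(s+1) := by omega
    have e2 : (2^s-1) + 1 = 2^s := by omega
    rw [e1, e2] at h; exact h
  have h2 : (2^(s+1)).choose (2^s) = 2 * c := by
    have hp : 0 < 2^s := hs1
    apply Nat.eq_of_mul_eq_mul_right hp
    rw [← h1, e0]; ring
  have hodd : c % 2 = 1 := aux_odd_choose (s+1) (2^s-1) (by omega)
  rw [h2]
  push_cast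
  rw [Int.mul_ediv_cancel_left _ (by norm_num)]
  obtain ⟨t, ht⟩ : ∃ t, c = 2*t+1 := ⟨c/2, by omega⟩
  rw [ht]
  push_cast
  rw [show ((2:ZMod 2)) = 0 from by decide, zero_mul, zero_add]

lemma aux_card (m : ℕ) :
    Nat.card ({p : Fin m × Fin m // p.1 < p.2} → ZMod 2) = 2 ^ (m * (m - 1) / 2) := by
  have e : {p : Fin m × Fin m // p.1 < p.2} ≃ Σ j : Fin m, Fin j.val :=
    { toFun := fun q => ⟨q.1.2, ⟨q.1.1.val, q.2⟩⟩
      invFun := fun x => ⟨(⟨x.2.val, lt_trans x.2.isLt x.1.isLt⟩, x.1), x.2.isLt⟩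
      left_inv := fun q => by ext <;> rfl
      right_inv := fun x => by rcases x with ⟨j, i⟩; rfl }
  have hcard : Fintype.card {p : Fin m × Fin m // p.1 < p.2} = m * (m-1) / 2 := by
    rw [Fintype.card_congr e, Fintype.card_sigma]
    simp only [Fintype.card_fin]
    rw [show (∑ x : Fin m, (x:ℕ)) = ∑ i ∈ Finset.range m, i from Fin.sum_univ_eq_sum_range (fun i => i) m, Finset.sum_range_id]
  rw [Nat.card_eq_fintype_card, Fintype.card_fun, hcard]
  norm_num

/-- Any additive homomorphism `Π` from the subring of `ℤ[x₁,…,xₘ]` generated by `2^n`-th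
powers to `(ℤ/2ℤ)^P`, `P` the set of pairs `i < j`, whose `(i,j)`-component sends each
generator `f^(2^n)` to the residue mod 2 of
`c_{f^{2^n}}(x_i x_j)/2^n + c_{f^{2^n}}(x_i^{2^{n-1}} x_j^{2^{n-1}})/2`,
is surjective onto that group of order `2^(m(m-1)/2)`. -/
theorem stmt_13 (n m : ℕ) (hn : 2 ≤ n) (hm : 2 ≤ m)
    (Pi : (Subring.closure
        (Set.range fun g : MvPolynomial (Fin m) ℤ => g ^ (2 ^ n))) →+
          ({p : Fin m × Fin m // p.1 < p.2} → ZMod 2))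
    (hPi : ∀ (f : MvPolynomial (Fin m) ℤ) (p : {p : Fin m × Fin m // p.1 < p.2}),
      Pi ⟨f ^ 2 ^ n, Subring.subset_closure ⟨f, rfl⟩⟩ p =
        ((MvPolynomial.coeff (Finsupp.single p.1.1 1 + Finsupp.single p.1.2 1)
              (f ^ 2 ^ n) / 2 ^ n +
            MvPolynomial.coeff
              (Finsupp.single p.1.1 (2 ^ (n - 1)) + Finsupp.single p.1.2 (2 ^ (n - 1)))
              (f ^ 2 ^ n) / 2 : ℤ) : ZMod 2)) :
    Function.Surjective Pi ∧
      Nat.card ({p : Fin m × Fin m // p.1 < p.2} → ZMod 2) = 2 ^ (m * (m - 1) / 2) := by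
  refine ⟨?_, aux_card m⟩
  have h4 : 4 ≤ 2^n := by
    calc (4:ℕ) = 2^2 := rfl
    _ ≤ 2^n := Nat.pow_le_pow_right (by norm_num) hn
  have hhalf : 2^(n-1) + 2^(n-1) = 2^n := by
    have : 2^n = 2 * 2^(n-1) := by
      rw [← pow_succ']
      congr 1
      omega
    omega
  have hgen : ∀ p : {p : Fin m × Fin m // p.1 < p.2},
      Pi ⟨(MvPolynomial.X p.1.1 + MvPolynomial.X p.1.2) ^ 2 ^ n,
          Subring.subset_closure ⟨_, rfl⟩⟩ = _root_.Pi.single p 1 := by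
    intro p
    funext q
    rw [hPi]
    rcases p with ⟨⟨i, j⟩, hij⟩
    rcases q with ⟨⟨k, l⟩, hkl⟩
    simp only at hij hkl ⊢
    by_cases hq : k = i ∧ l = j
    · obtain ⟨rfl, rfl⟩ := hq
      rw [aux_coeff_same m k l (ne_of_lt hkl), aux_coeff_same m k l (ne_of_lt hkl),
        if_neg (by omega), if_pos hhalf]
      rw [show _root_.Pi.single (⟨(k, l), hij⟩ : {p : Fin m × Fin m // p.1 < p.2}) 1
            ⟨(k, l), hkl⟩ = 1 from by rw [show (⟨(k,l),hkl⟩ : {p : Fin m × Fin m // p.1 < p.2})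
              = ⟨(k,l),hij⟩ from rfl, _root_.Pi.single_eq_same]]
      rw [show ((0:ℤ)) / 2^n = 0 from by simp, zero_add]
      exact aux_parity n (by omega)
    · rw [aux_coeff_ne m i j k l hij hkl hq _ 1 one_pos,
        aux_coeff_ne m i j k l hij hkl hq _ (2^(n-1)) (by positivity)]
      norm_num
      rw [_root_.Pi.single_apply, if_neg]
      intro h
      apply hq
      have := Subtype.ext_iff.mp h
      simp only [Prod.mk.injEq] at this
      exact this
  intro v
  have hv : ∀ q, ∃ y, Pi y = _root_.Pi.single q (v q) := by
    intro q
    have hx : ∀ x : ZMod 2, x = 0 ∨ x = 1 := by decide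
    rcases hx (v q) with h | h
    · exact ⟨0, by rw [map_zero, h, _root_.Pi.single_zero]⟩
    · exact ⟨_, by rw [hgen q, h]⟩
  choose y hy using hv
  refine ⟨∑ q, y q, ?_⟩
  rw [map_sum, Finset.sum_congr rfl (fun q _ => hy q)]
  exact Finset.univ_sum_single v
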